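/- The maximum number of elements in a chain of T_n^B is exactly n² + 1 (i.e., λ₁(T_n^B) = n² + 1): there exists a chain of valid tuples with n² + 1 elements, and no chain has more. -/

import Mathlib

/-- Validity predicate for elements of the type B Tamari lattice `T_n^B`,
encoded as tuples `r : Fin n → Fin (n+1)` where the value `n` represents `∞`. -/
def ValidB (n : ℕ) (r : Fin n → Fin (n+1)) : Prop :=
  (∀ i j : Fin n, i < j → (r j : ℕ) < n → (j : ℕ) - (i : ℕ) ≤ (r j : ℕ) →
      (r i : ℕ) ≤ (r j : ℕ) - ((j : ℕ) - (i : ℕ))) ∧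
  (∀ i : Fin n, ∀ _h1 : (r i : ℕ) < n, ∀ h2 : (i : ℕ) + 1 ≤ (r i : ℕ),
      (r ⟨n + (i : ℕ) - (r i : ℕ), by have := i.isLt; omega⟩ : ℕ) = n)

def fB (n m : ℕ) : Fin n → Fin (n+1) := fun i =>
  if _h : n - m / n ≤ (i : ℕ) then ⟨n, Nat.lt_succ_self n⟩
  else if (i : ℕ) = n - 1 - m / n then
    ⟨m % n, Nat.lt_succ_of_lt (Nat.mod_lt m (by omega))⟩
  else 0

lemma fB_val (n m : ℕ) (i : Fin n) :
    (fB n m i : ℕ) =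
      if n - m / n ≤ (i : ℕ) then n
      else if (i : ℕ) = n - 1 - m / n then m % n else 0 := by
  unfold fB; split_ifs <;> simp

lemma fB_top (n m k : ℕ) (hk : k < n) (hc : n - m / n ≤ k) :
    (fB n m ⟨k, hk⟩ : ℕ) = n := by
  rw [fB_val]; exact if_pos hc

lemma fB_valid (n m : ℕ) (hn : 0 < n) : ValidB n (fB n m) := by
  constructor
  · intro i j hij hjlt hgap
    have hij' : (i : ℕ) < (j : ℕ) := hij
    rw [fB_val] at hjlt hgap
    rw [fB_val, fB_val]
    by_cases h1 : n - m / n ≤ (j : ℕ)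
    · rw [if_pos h1] at hjlt; omega
    · rw [if_neg h1] at hjlt hgap
      by_cases h2 : (j : ℕ) = n - 1 - m / n
      · rw [if_pos h2] at hjlt hgap
        have hi1 : ¬ (n - m / n ≤ (i : ℕ)) := by omega
        have hi2 : ¬ ((i : ℕ) = n - 1 - m / n) := by omega
        rw [if_neg hi1, if_neg hi2]
        exact Nat.zero_le _
      · rw [if_neg h2] at hgap; omega
  · intro i h1 h2
    rw [fB_val] at h1 h2
    by_cases hb1 : n - m / n ≤ (i : ℕ)
    · rw [if_pos hb1] at h1; omega
    · by_cases hb2 : (i : ℕ) = n - 1 - m / n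
      · have hvi : (fB n m i : ℕ) = m % n := by
          rw [fB_val, if_neg hb1, if_pos hb2]
        rw [if_neg hb1, if_pos hb2] at h1 h2
        apply fB_top
        rw [hvi]
        omega
      · rw [if_neg hb1, if_neg hb2] at h2; omega

lemma fB_mono (n : ℕ) {m m' : ℕ} (h : m ≤ m') : fB n m ≤ fB n m' := by
  intro i
  rw [Fin.le_def, fB_val, fB_val]
  have hq : m / n ≤ m' / n := Nat.div_le_div_right h
  by_cases h1 : n - m / n ≤ (i : ℕ)
  · have h1' : n - m' / n ≤ (i : ℕ) := by omega
    rw [if_pos h1, if_pos h1']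
  · rw [if_neg h1]
    by_cases h2 : (i : ℕ) = n - 1 - m / n
    · rw [if_pos h2]
      by_cases h3 : n - m' / n ≤ (i : ℕ)
      · rw [if_pos h3]
        have hn : 0 < n := by omega
        exact le_of_lt (Nat.mod_lt m hn)
      · rw [if_neg h3]
        have hq2 : m / n = m' / n := by omega
        have h4 : (i : ℕ) = n - 1 - m' / n := by omega
        rw [if_pos h4]
        have hd := Nat.div_add_mod m n
        have hd' := Nat.div_add_mod m' n
        rw [hq2] at hd
        omega
    · rw [if_neg h2]
      exact Nat.zero_le _

lemma fB_val' (n m k : ℕ) (hk : k < n) :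
    (fB n m ⟨k, hk⟩ : ℕ) =
      if n - m / n ≤ k then n
      else if k = n - 1 - m / n then m % n else 0 :=
  fB_val n m ⟨k, hk⟩

lemma fB_inj (n : ℕ) (hn : 0 < n) {m m' : ℕ} (hm : m < m') (hm' : m' ≤ n ^ 2) :
    fB n m ≠ fB n m' := by
  have hsq : n ^ 2 = n * n := sq n
  have hqlt : m / n < n := by
    rw [Nat.div_lt_iff_lt_mul hn]; omega
  have hq : m / n ≤ m' / n := Nat.div_le_div_right (le_of_lt hm)
  have hd := Nat.div_add_mod m n
  have hd' := Nat.div_add_mod m' n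
  have hmodm : m % n < n := Nat.mod_lt m hn
  have hmodm' : m' % n < n := Nat.mod_lt m' hn
  intro heq
  have hk : n - 1 - m / n < n := by
    revert hqlt; generalize m / n = q; intro; omega
  have h0 : (fB n m ⟨n - 1 - m / n, hk⟩ : ℕ) =
      (fB n m' ⟨n - 1 - m / n, hk⟩ : ℕ) := by rw [heq]
  rw [fB_val' n m _ hk, fB_val' n m' _ hk] at h0
  have hc : ¬ (n - m / n ≤ n - 1 - m / n) := by
    revert hqlt; generalize m / n = q; intro; omega
  rcases eq_or_lt_of_le hq with hqe | hql
  · rw [← hqe] at h0 hd'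
    rw [if_neg hc, if_pos rfl, if_neg hc, if_pos rfl] at h0
    omega
  · have hc' : n - m' / n ≤ n - 1 - m / n := by
      revert hqlt hql; generalize m / n = q; generalize m' / n = q'
      intro _ _; omega
    rw [if_neg hc, if_pos rfl, if_pos hc'] at h0
    omega

theorem lambda_one (n : ℕ) :
    (∃ C : Finset (Fin n → Fin (n+1)), (∀ r ∈ C, ValidB n r) ∧
        IsChain (· ≤ ·) (C : Set (Fin n → Fin (n+1))) ∧ C.card = n ^ 2 + 1) ∧
    (∀ C : Finset (Fin n → Fin (n+1)), (∀ r ∈ C, ValidB n r) →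
        IsChain (· ≤ ·) (C : Set (Fin n → Fin (n+1))) → C.card ≤ n ^ 2 + 1) := by
  classical
  constructor
  · rcases Nat.eq_zero_or_pos n with hn | hn
    · subst hn
      refine ⟨{fun _ => 0}, ?_, ?_, by simp⟩
      · intro r _
        exact ⟨fun i => i.elim0, fun i => i.elim0⟩
      · simp
    · refine ⟨(Finset.range (n ^ 2 + 1)).image (fB n), ?_, ?_, ?_⟩
      · intro r hr
        simp only [Finset.mem_image, Finset.mem_range] at hr
        obtain ⟨m, _, rfl⟩ := hr
        exact fB_valid n m hn
      · intro a ha b hb _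
        simp only [Finset.coe_image, Set.mem_image, Finset.mem_coe,
          Finset.mem_range] at ha hb
        obtain ⟨m, _, rfl⟩ := ha
        obtain ⟨m', _, rfl⟩ := hb
        rcases le_total m m' with h | h
        · exact Or.inl (fB_mono n h)
        · exact Or.inr (fB_mono n h)
      · rw [Finset.card_image_of_injOn, Finset.card_range]
        intro a ha b hb hab
        simp only [Finset.mem_coe, Finset.mem_range] at ha hb
        by_contra hne
        rcases Nat.lt_or_ge a b with h | h
        · exact fB_inj n hn h (by omega) hab
        · exact fB_inj n hn (show b < a by omega) (by omega) hab.symm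
  · intro C hval hchain
    have hle := Finset.card_le_card_of_injOn
      (f := fun r : Fin n → Fin (n+1) => ∑ i, (r i : ℕ))
      (s := C) (t := Finset.range (n ^ 2 + 1)) ?_ ?_
    · simpa using hle
    · intro r _
      simp only [Finset.coe_range, Set.mem_Iio, Finset.mem_coe, Finset.mem_range]
      have h1 : ∑ i, (r i : ℕ) ≤ ∑ _i : Fin n, n :=
        Finset.sum_le_sum (fun i _ => Nat.le_of_lt_succ (r i).isLt)
      have h2 : ∑ _i : Fin n, n = n * n := by
        simp [Finset.sum_const, mul_comm]
      have hsq : n ^ 2 = n * n := sq n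
      omega
    · intro r hr r' hr' heq
      by_contra hne
      have key : ∀ s s' : Fin n → Fin (n+1), s ≤ s' →
          (∑ i, (s i : ℕ)) = ∑ i, (s' i : ℕ) → s = s' := by
        intro s s' hss hsum
        have := (Finset.sum_eq_sum_iff_of_le
          (fun i _ => (by exact_mod_cast hss i : (s i : ℕ) ≤ (s' i : ℕ)))).mp hsum
        funext i
        exact Fin.ext (this i (Finset.mem_univ i))
      rcases hchain hr hr' hne with h | h
      · exact hne (key r r' h heq)
      · exact hne (key r' r h heq.symm).symm
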